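/- If the function n̂ ↦ T_c(n̂) attains its supremum over the positive integers at some positive integer, then it attains its supremum at some positive integer n̂* satisfying Σ_{i=1}^{n̂*} p_T(i) > 1 − c. Equivalently, T_c is nondecreasing on {n̂ : Σ_{i=1}^{n̂} p_T(i) ≤ 1 − c}, and every global maximizer of T_c (or one achieving the same value) lies at or beyond (n^S)* = inf{ n ∈ ℤ₊ : Σ_{i=1}^{n} p_T(i) > 1 − c }, which is finite since Σ_{i=1}^∞ p_T(i) = 1 > 1 − c. -/

import Mathlib

/-- The pmf `p(i | n̂)` obtained by truncating the triggering probabilities `p_T` at `n̂`. -/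
noncomputable def pcond (pT : ℕ → ℝ) (nh i : ℕ) : ℝ :=
  if 0 < i ∧ i < nh then pT i
  else if i = nh then 1 - ∑ j ∈ Finset.Ico 1 nh, pT j
  else 0

/-- `T_c(n̂) = E[max(n − c·n̂, 0)]` when `n` has pmf `p(· | n̂)`. -/
noncomputable def Tc (c : ℝ) (pT : ℕ → ℝ) (nh : ℕ) : ℝ :=
  ∑ i ∈ Finset.Icc 1 nh, max ((i : ℝ) - c * nh) 0 * pcond pT nh i

private lemma Tc_eq (c : ℝ) (hc1 : c ≤ 1) (pT : ℕ → ℝ) (n : ℕ) (hn : 0 < n) :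
    Tc c pT n = (∑ i ∈ Finset.Ico 1 n, max ((i : ℝ) - c * n) 0 * pT i)
      + ((n : ℝ) - c * n) * (1 - ∑ j ∈ Finset.Ico 1 n, pT j) := by
  unfold Tc
  rw [← Finset.Ico_add_one_right_eq_Icc, Finset.sum_Ico_succ_top hn]
  congr 1
  · apply Finset.sum_congr rfl
    intro i hi
    simp only [Finset.mem_Ico] at hi
    unfold pcond
    rw [if_pos ⟨hi.1, hi.2⟩]
  · unfold pcond
    rw [if_neg (by omega), if_pos rfl]
    congr 1
    apply max_eq_left
    have h0 : (0:ℝ) ≤ (n:ℝ) := Nat.cast_nonneg n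
    nlinarith

private lemma Tc_step (c : ℝ) (hc0 : 0 < c) (hc1 : c < 1) (pT : ℕ → ℝ)
    (hpos : ∀ i, 0 ≤ pT i) (n : ℕ) (hn : 0 < n)
    (hS : ∑ i ∈ Finset.Icc 1 n, pT i ≤ 1 - c) :
    Tc c pT n ≤ Tc c pT (n + 1) := by
  rw [Tc_eq c hc1.le pT n hn, Tc_eq c hc1.le pT (n+1) (by omega)]
  rw [Finset.sum_Ico_succ_top hn, Finset.sum_Ico_succ_top hn (f := pT)]
  push_cast
  set Q := ∑ j ∈ Finset.Ico 1 n, pT j with hQ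
  have hQS : ∑ i ∈ Finset.Icc 1 n, pT i = Q + pT n := by
    rw [← Finset.Ico_add_one_right_eq_Icc, Finset.sum_Ico_succ_top hn]
  rw [hQS] at hS
  have hmax : ∀ a : ℝ, max a 0 - c ≤ max (a - c) 0 := by
    intro a
    rcases le_total a 0 with h | h
    · rw [max_eq_right h]
      have := le_max_right (a - c) 0
      linarith
    · rw [max_eq_left h]
      have := le_max_left (a - c) 0
      linarith
  have hsum1 : (∑ i ∈ Finset.Ico 1 n, max ((i : ℝ) - c * n) 0 * pT i) - c * Q
      ≤ ∑ i ∈ Finset.Ico 1 n, max ((i : ℝ) - c * (n + 1)) 0 * pT i := by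
    rw [hQ, Finset.mul_sum, ← Finset.sum_sub_distrib]
    apply Finset.sum_le_sum
    intro i _
    have h1 : max ((i : ℝ) - c * n) 0 - c ≤ max ((i : ℝ) - c * (n + 1)) 0 := by
      have := hmax ((i : ℝ) - c * n)
      have he : (i : ℝ) - c * n - c = (i : ℝ) - c * (n + 1) := by ring
      rwa [he] at this
    nlinarith [hpos i, le_max_right ((i : ℝ) - c * ((n : ℝ) + 1)) 0]
  have hM : ((n : ℝ) - c * (n + 1)) * pT n ≤ max ((n : ℝ) - c * ((n : ℝ) + 1)) 0 * pT n :=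
    mul_le_mul_of_nonneg_right (le_max_left _ _) (hpos n)
  have hid : ((n : ℝ) - c * ((n : ℝ) + 1)) * pT n
      + (((n : ℝ) + 1) - c * ((n : ℝ) + 1)) * (1 - (Q + pT n))
      - ((n : ℝ) - c * n) * (1 - Q) - c * Q = (1 - c) - (Q + pT n) := by ring
  linarith [hsum1, hM, hid, hS]

/-- If `T_c` attains its supremum over the positive integers at some positive integer, then it
attains it at some `n̂*` with triggering-probability quantile `Σ_{i=1}^{n̂*} p_T(i) > 1 − c`. -/
theorem global_maximizer_quantile (c : ℝ) (hc : c ∈ Set.Ioo (0 : ℝ) 1)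
    (pT : ℕ → ℝ) (hpT0 : pT 0 = 0) (hpos : ∀ i, 0 ≤ pT i) (hsum : HasSum pT 1) :
    (∃ nmax : ℕ, 0 < nmax ∧ ∀ n : ℕ, 0 < n → Tc c pT n ≤ Tc c pT nmax) →
      ∃ nstar : ℕ, 0 < nstar ∧ (∀ n : ℕ, 0 < n → Tc c pT n ≤ Tc c pT nstar) ∧
        1 - c < ∑ i ∈ Finset.Icc 1 nstar, pT i := by
  rintro ⟨nmax, hnmax, hmax⟩
  obtain ⟨hc0, hc1⟩ := hc
  -- the partial sums over Icc 1 n eventually exceed 1 - c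
  have hIcc_range : ∀ n : ℕ, ∑ i ∈ Finset.Icc 1 n, pT i = ∑ i ∈ Finset.range (n + 1), pT i := by
    intro n
    rw [Finset.range_eq_Ico, ← Finset.Ico_add_one_right_eq_Icc,
      ← Finset.sum_Ico_consecutive pT (Nat.zero_le 1) (by omega : 1 ≤ n + 1)]
    simp [hpT0]
  have hmono : ∀ a b : ℕ, a ≤ b →
      ∑ i ∈ Finset.Icc 1 a, pT i ≤ ∑ i ∈ Finset.Icc 1 b, pT i := by
    intro a b hab
    apply Finset.sum_le_sum_of_subset_of_nonneg
    · exact Finset.Icc_subset_Icc le_rfl hab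
    · intro i _ _; exact hpos i
  have hex : ∃ n : ℕ, 1 - c < ∑ i ∈ Finset.Icc 1 n, pT i := by
    have ht := hsum.tendsto_sum_nat
    have hev : ∀ᶠ N in Filter.atTop, 1 - c < ∑ i ∈ Finset.range N, pT i :=
      ht.eventually (eventually_gt_nhds (by linarith))
    obtain ⟨N, hN⟩ := hev.exists
    refine ⟨N, lt_of_lt_of_le hN ?_⟩
    rw [hIcc_range]
    exact Finset.sum_le_sum_of_subset_of_nonneg
      (Finset.range_subset_range.2 (Nat.le_succ N)) (fun i _ _ => hpos i)
  classical
  set n0 := Nat.find hex with hn0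
  have hn0P : 1 - c < ∑ i ∈ Finset.Icc 1 n0, pT i := Nat.find_spec hex
  have hn0pos : 0 < n0 := by
    rcases Nat.eq_zero_or_pos n0 with h | h
    · exfalso
      rw [h] at hn0P
      simp at hn0P
      linarith
    · exact h
  rcases le_or_gt n0 nmax with hle | hlt
  · exact ⟨nmax, hnmax, hmax, lt_of_lt_of_le hn0P (hmono _ _ hle)⟩
  · -- Tc is nondecreasing from nmax up to n0
    have mono : ∀ m : ℕ, nmax ≤ m → m ≤ n0 → Tc c pT nmax ≤ Tc c pT m := by
      intro m
      induction m with
      | zero => intro h _; omega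
      | succ k ih =>
        intro hk hle
        rcases Nat.lt_or_ge nmax (k + 1) with h | h
        · have hk' : nmax ≤ k := by omega
          have h1 := ih hk' (by omega)
          have hSk : ∑ i ∈ Finset.Icc 1 k, pT i ≤ 1 - c :=
            le_of_not_gt (Nat.find_min hex (by omega))
          have h2 := Tc_step c hc0 hc1 pT hpos k (by omega) hSk
          linarith
        · have : nmax = k + 1 := by omega
          rw [this]
    have hT : Tc c pT nmax ≤ Tc c pT n0 := mono n0 hlt.le le_rfl
    exact ⟨n0, hn0pos, fun n hn => le_trans (hmax n hn) hT, hn0P⟩
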